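/- Each member S_j of the canonical partition is the union of those members Ŝ_i of the principal partition whose critical value λ_i satisfies ⌈λ_i⌉ = β_j. In particular, the canonical partition is an aggregation of the principal partition, and the canonical chain is a subchain of the principal chain. -/
import Mathlib


open Finset

variable {α : Type*} [Fintype α] [DecidableEq α]

def Supermodular (p : Finset α → EReal) : Prop :=
  ∀ X Y : Finset α, p X + p Y ≤ p (X ∩ Y) + p (X ∪ Y)

/-- `p` takes values in `ℤ ∪ {−∞}`. -/
def IntegerValued (p : Finset α → EReal) : Prop :=
  ∀ X : Finset α, p X = ⊥ ∨ ∃ n : ℤ, p X = ((n : ℝ) : EReal)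

/-- `X` maximizes `Z ↦ p(Z) − λ|Z|` over all subsets `Z` of the ground-set. -/
def IsMaximizer (p : Finset α → EReal) (lam : ℝ) (X : Finset α) : Prop :=
  ∀ Y : Finset α,
    p Y - ((lam * (Y.card : ℝ) : ℝ) : EReal) ≤ p X - ((lam * (X.card : ℝ) : ℝ) : EReal)

/-- `L` assigns to each real `λ` the smallest maximizer of `X ↦ p(X) − λ|X|`. -/
def SmallestMaximizerFun (p : Finset α → EReal) (L : ℝ → Finset α) : Prop :=
  ∀ lam : ℝ, IsMaximizer p lam (L lam) ∧ ∀ X : Finset α, IsMaximizer p lam X → L lam ⊆ X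

/-- `λ` is a critical value: the family of maximizers of `p(X) − λ|X|` has at
least two members. -/
def IsCriticalValue (p : Finset α → EReal) (lam : ℝ) : Prop :=
  ∃ X Y : Finset α, X ≠ Y ∧ IsMaximizer p lam X ∧ IsMaximizer p lam Y

set_option linter.unusedSectionVars false
set_option linter.unusedVariables false

section AuxPP

variable {p : Finset α → EReal}

lemma pt_ne_top (hint : IntegerValued p) (X : Finset α) : p X ≠ ⊤ := by
  rcases hint X with h | ⟨n, h⟩ <;> simp [h]

lemma coe_toReal_pt (hint : IntegerValued p) {X : Finset α} (hX : p X ≠ ⊥) :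
    p X = (((p X).toReal : ℝ) : EReal) := (EReal.coe_toReal (pt_ne_top hint X) hX).symm

lemma maximizer_ne_bot (hp0 : p ∅ = 0) {μ : ℝ} {X : Finset α} (h : IsMaximizer p μ X) :
    p X ≠ ⊥ := by
  intro hb
  have h0 := h ∅
  rw [hp0, hb] at h0
  simp [EReal.bot_sub] at h0

lemma maximizer_real (hp0 : p ∅ = 0) (hint : IntegerValued p)
    {μ : ℝ} {X : Finset α} (h : IsMaximizer p μ X) {Y : Finset α} (hY : p Y ≠ ⊥) :
    (p Y).toReal - μ * Y.card ≤ (p X).toReal - μ * X.card := by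
  have hX := maximizer_ne_bot hp0 h
  have h2 := h Y
  rw [coe_toReal_pt hint hY, coe_toReal_pt hint hX, ← EReal.coe_sub, ← EReal.coe_sub] at h2
  exact_mod_cast h2

lemma isMaximizer_of_real (hint : IntegerValued p)
    {μ : ℝ} {X : Finset α} (hX : p X ≠ ⊥)
    (h : ∀ Y, p Y ≠ ⊥ → (p Y).toReal - μ * Y.card ≤ (p X).toReal - μ * X.card) :
    IsMaximizer p μ X := by
  intro Y
  by_cases hY : p Y = ⊥
  · rw [hY, EReal.bot_sub]; exact bot_le
  · rw [coe_toReal_pt hint hY, coe_toReal_pt hint hX, ← EReal.coe_sub, ← EReal.coe_sub]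
    exact_mod_cast h Y hY

lemma L_antitone (hp0 : p ∅ = 0) (hint : IntegerValued p) (hsup : Supermodular p)
    {L : ℝ → Finset α} (hL : SmallestMaximizerFun p L)
    {a b : ℝ} (hab : a ≤ b) : L b ⊆ L a := by
  rcases eq_or_lt_of_le hab with h | hlt
  · rw [h]
  have hA : IsMaximizer p a (L a) := (hL a).1
  have hB : IsMaximizer p b (L b) := (hL b).1
  have hAb : p (L a) ≠ ⊥ := maximizer_ne_bot hp0 hA
  have hBb : p (L b) ≠ ⊥ := maximizer_ne_bot hp0 hB
  have hsm := hsup (L a) (L b)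
  have hIb : p (L a ∩ L b) ≠ ⊥ := by
    intro h
    rw [h, EReal.bot_add, coe_toReal_pt hint hAb, coe_toReal_pt hint hBb,
      ← EReal.coe_add] at hsm
    exact (EReal.coe_ne_bot _) (le_bot_iff.1 hsm)
  have hUb : p (L a ∪ L b) ≠ ⊥ := by
    intro h
    rw [h, EReal.add_bot, coe_toReal_pt hint hAb, coe_toReal_pt hint hBb,
      ← EReal.coe_add] at hsm
    exact (EReal.coe_ne_bot _) (le_bot_iff.1 hsm)
  rw [coe_toReal_pt hint hAb, coe_toReal_pt hint hBb, coe_toReal_pt hint hIb,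
    coe_toReal_pt hint hUb, ← EReal.coe_add, ← EReal.coe_add] at hsm
  have hsmr : (p (L a)).toReal + (p (L b)).toReal ≤
      (p (L a ∩ L b)).toReal + (p (L a ∪ L b)).toReal := by exact_mod_cast hsm
  have h1 := maximizer_real hp0 hint hA hUb
  have h2 := maximizer_real hp0 hint hB hIb
  have hcard : ((L a ∩ L b).card : ℝ) + ((L a ∪ L b).card : ℝ) =
      (L a).card + (L b).card := by
    exact_mod_cast congrArg (fun n : ℕ => (n : ℝ)) (Finset.card_inter_add_card_union (L a) (L b))
  have hcle : ((L b).card : ℝ) ≤ ((L a ∩ L b).card : ℝ) := by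
    by_contra hgt
    push_neg at hgt
    have hu : ((L a ∪ L b).card : ℝ) = (L a).card + (L b).card - (L a ∩ L b).card := by
      linarith
    rw [hu] at h1
    nlinarith [mul_pos (sub_pos.2 hlt) (sub_pos.2 hgt)]
  have hc : (L b).card ≤ (L a ∩ L b).card := by exact_mod_cast hcle
  have hsub : L a ∩ L b = L b :=
    Finset.eq_of_subset_of_card_le (Finset.inter_subset_right) hc
  exact Finset.inter_eq_right.1 hsub

lemma L_eq_of_no_crit (hp0 : p ∅ = 0) (hint : IntegerValued p) (hsup : Supermodular p)
    {L : ℝ → Finset α} (hL : SmallestMaximizerFun p L)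
    {a b : ℝ} (hab : a < b) (hnc : ∀ μ, a < μ → μ ≤ b → ¬ IsCriticalValue p μ) :
    L a = L b := by
  classical
  have hXmax : IsMaximizer p b (L b) := (hL b).1
  have hXb : p (L b) ≠ ⊥ := maximizer_ne_bot hp0 hXmax
  set X := L b with hXdef
  set x := (p X).toReal with hx
  set I : Set ℝ := {μ | μ ∈ Set.Icc a b ∧ IsMaximizer p μ X} with hI
  have hbI : b ∈ I := ⟨⟨le_of_lt hab, le_refl b⟩, hXmax⟩
  have hne : I.Nonempty := ⟨b, hbI⟩
  have hbdd : BddBelow I := ⟨a, fun μ hμ => hμ.1.1⟩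
  set ν := sInf I with hν
  have hνa : a ≤ ν := le_csInf hne (fun μ hμ => hμ.1.1)
  have hνb : ν ≤ b := csInf_le hbdd hbI
  have hνmax : IsMaximizer p ν X := by
    apply isMaximizer_of_real hint hXb
    intro Y hY
    rcases lt_trichotomy ((Y.card : ℝ)) ((X.card : ℝ)) with hd | hd | hd
    · have h1 : (p Y).toReal - b * Y.card ≤ x - b * X.card :=
        maximizer_real hp0 hint hXmax hY
      nlinarith
    · have h1 : (p Y).toReal - b * Y.card ≤ x - b * X.card :=
        maximizer_real hp0 hint hXmax hY
      rw [hd] at h1 ⊢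
      linarith
    · have hlb : ((p Y).toReal - x) / ((Y.card : ℝ) - X.card) ≤ ν := by
        apply le_csInf hne
        intro μ hμ
        have h1 : (p Y).toReal - μ * Y.card ≤ x - μ * X.card :=
          maximizer_real hp0 hint hμ.2 hY
        rw [div_le_iff₀ (by linarith)]
        linarith
      rw [div_le_iff₀ (by linarith)] at hlb
      linarith
  rcases eq_or_lt_of_le hνa with hcase | hcase
  · have hmax_a : IsMaximizer p a X := hcase ▸ hνmax
    exact Finset.Subset.antisymm ((hL a).2 X hmax_a)
      (L_antitone hp0 hint hsup hL (le_of_lt hab))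
  · exfalso
    apply hnc ν hcase hνb
    set h : Finset α → ℝ := fun Y =>
      if p Y ≠ ⊥ ∧ (X.card : ℝ) < Y.card then ((p Y).toReal - x) / ((Y.card : ℝ) - X.card)
      else a with hh
    have hne' : (Finset.univ : Finset (Finset α)).Nonempty := ⟨∅, Finset.mem_univ _⟩
    set c := Finset.univ.sup' hne' h with hc
    have hYle : ∀ Y : Finset α, h Y ≤ ν := by
      intro Y
      by_cases hq : p Y ≠ ⊥ ∧ (X.card : ℝ) < Y.card
      · rw [hh]
        simp only [if_pos hq]
        by_contra hgt
        push_neg at hgt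
        have h1 : (p Y).toReal - ν * Y.card ≤ x - ν * X.card :=
          maximizer_real hp0 hint hνmax hq.1
        rw [lt_div_iff₀ (by linarith [hq.2])] at hgt
        linarith
      · rw [hh]
        simp only [if_neg hq]
        exact le_of_lt hcase
    have hcle : c ≤ ν := Finset.sup'_le _ _ (fun Y _ => hYle Y)
    have hνle : ν ≤ c := by
      by_contra hgt
      push_neg at hgt
      set μ := (max a c + ν) / 2 with hμdef
      have hmlt : max a c < ν := max_lt hcase hgt
      have hμa : a < μ := by
        have := le_max_left a c
        rw [hμdef]; linarith
      have hμν : μ < ν := by rw [hμdef]; linarith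
      have hμc : c < μ := by
        have := le_max_right a c
        rw [hμdef]; linarith
      have hμb : μ ≤ b := le_trans (le_of_lt hμν) hνb
      have hnotmax : ¬ IsMaximizer p μ X := by
        intro hm
        have : ν ≤ μ := csInf_le hbdd ⟨⟨le_of_lt hμa, hμb⟩, hm⟩
        linarith
      rw [IsMaximizer] at hnotmax
      push_neg at hnotmax
      obtain ⟨Y, hYbad⟩ := hnotmax
      have hYbad' : p X - ((μ * (X.card : ℝ) : ℝ) : EReal) <
          p Y - ((μ * (Y.card : ℝ) : ℝ) : EReal) := hYbad
      have hYb : p Y ≠ ⊥ := by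
        intro hb'
        rw [hb', EReal.bot_sub] at hYbad'
        exact not_lt_bot hYbad'
      have hreal : x - μ * X.card < (p Y).toReal - μ * Y.card := by
        rw [coe_toReal_pt hint hYb, coe_toReal_pt hint hXb, ← EReal.coe_sub,
          ← EReal.coe_sub] at hYbad'
        exact_mod_cast hYbad'
      have hd : (X.card : ℝ) < Y.card := by
        by_contra hd'
        push_neg at hd'
        have h1 : (p Y).toReal - ν * Y.card ≤ x - ν * X.card :=
          maximizer_real hp0 hint hνmax hYb
        nlinarith
      have hμlt : μ < h Y := by
        rw [hh]
        simp only [if_pos (And.intro hYb hd)]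
        rw [lt_div_iff₀ (by linarith)]
        linarith
      have : h Y ≤ c := Finset.le_sup' h (Finset.mem_univ Y)
      linarith
    have hceq : c = ν := le_antisymm hcle hνle
    obtain ⟨Y₀, -, hY₀⟩ := Finset.exists_mem_eq_sup' hne' h
    rw [← hc, hceq] at hY₀
    have hq : p Y₀ ≠ ⊥ ∧ (X.card : ℝ) < Y₀.card := by
      by_contra hq
      rw [hh] at hY₀
      simp only [if_neg hq] at hY₀
      exact (ne_of_gt hcase) hY₀
    have heq : (p Y₀).toReal - ν * Y₀.card = x - ν * X.card := by
      rw [hh] at hY₀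
      simp only [if_pos hq] at hY₀
      rw [eq_div_iff (by linarith [hq.2])] at hY₀
      linarith [hY₀]
    have hY₀max : IsMaximizer p ν Y₀ := by
      apply isMaximizer_of_real hint hq.1
      intro Z hZ
      have := maximizer_real hp0 hint hνmax hZ
      rw [heq]
      linarith
    refine ⟨Y₀, X, ?_, hY₀max, hνmax⟩
    intro hEq
    rw [hEq] at hq
    exact lt_irrefl _ hq.2

lemma L_univ_small (hp0 : p ∅ = 0) (hfin : p (Finset.univ : Finset α) ≠ ⊥)
    (hint : IntegerValued p) {L : ℝ → Finset α} (hL : SmallestMaximizerFun p L) :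
    ∃ μ₀ : ℝ, ∀ μ ≤ μ₀, L μ = Finset.univ := by
  classical
  set m := (p (Finset.univ : Finset α)).toReal with hm
  set g : Finset α → ℝ := fun Y =>
    if p Y ≠ ⊥ ∧ Y ≠ Finset.univ then
      (m - (p Y).toReal) / ((Fintype.card α : ℝ) - Y.card) else 0 with hg
  have hne' : (Finset.univ : Finset (Finset α)).Nonempty := ⟨∅, Finset.mem_univ _⟩
  refine ⟨Finset.univ.inf' hne' g - 1, fun μ hμ => ?_⟩
  by_contra hYne
  have hYmax : IsMaximizer p μ (L μ) := (hL μ).1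
  have hYb : p (L μ) ≠ ⊥ := maximizer_ne_bot hp0 hYmax
  have hcard : (L μ).card < Fintype.card α := by
    rw [← Finset.card_univ]
    exact Finset.card_lt_card (Finset.ssubset_univ_iff.2 hYne)
  have hcardR : ((L μ).card : ℝ) < Fintype.card α := by exact_mod_cast hcard
  have hmax := maximizer_real hp0 hint hYmax hfin
  rw [Finset.card_univ] at hmax
  have hgY : g (L μ) = (m - (p (L μ)).toReal) / ((Fintype.card α : ℝ) - (L μ).card) := by
    rw [hg]; simp only [if_pos (And.intro hYb hYne)]
  have hinf : Finset.univ.inf' hne' g ≤ g (L μ) := Finset.inf'_le g (Finset.mem_univ _)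
  have hμlt : μ < g (L μ) := by linarith
  rw [hgY, lt_div_iff₀ (by linarith)] at hμlt
  linarith

lemma sdiff_union_sdiff_of_subset {S A B : Finset α} (h1 : S ⊆ A) (h2 : A ⊆ B) :
    (B \ A) ∪ (A \ S) = B \ S := by
  ext x
  simp only [Finset.mem_union, Finset.mem_sdiff]
  have hx1 := @h1 x
  have hx2 := @h2 x
  tauto

end AuxPP

/-- Relation between canonical and principal partitions: each member
`S_j = L(β_j − 1) \ L(β_j)` of the canonical partition is the union of the members
`Ŝ_i = L(λ_{i+1}) \ L(λ_i)` (with `L(λ_{r+1}) := S`) of the principal partition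
whose critical value satisfies `⌈λ_i⌉ = β_j`; and each canonical chain member
`L(β_j − 1)` equals some principal chain member `Ĉ_i = L(λ_{i+1})` (or `S` for `i = r`). -/
theorem canonical_partition_aggregates_principal (p : Finset α → EReal) (hp0 : p ∅ = 0)
    (hfin : p (Finset.univ : Finset α) ≠ ⊥) (hsup : Supermodular p)
    (hint : IntegerValued p) (L : ℝ → Finset α) (hL : SmallestMaximizerFun p L)
    (r q : ℕ) (hr : 1 ≤ r) (hq : 1 ≤ q) (lam : ℕ → ℝ) (β : ℕ → ℤ)
    (hlamdec : ∀ i, 1 ≤ i → i < r → lam (i + 1) < lam i)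
    (hβdec : ∀ j, 1 ≤ j → j < q → β (j + 1) < β j)
    (hcrit : ∀ μ : ℝ, IsCriticalValue p μ ↔ ∃ i, 1 ≤ i ∧ i ≤ r ∧ lam i = μ)
    (hess : ∀ b : ℤ, L (b : ℝ) ≠ L ((b : ℝ) - 1) ↔ ∃ j, 1 ≤ j ∧ j ≤ q ∧ β j = b)
    (Shat : ℕ → Finset α)
    (hShat : ∀ i, 1 ≤ i → i < r → Shat i = L (lam (i + 1)) \ L (lam i))
    (hShatr : Shat r = Finset.univ \ L (lam r)) :
    ∀ j, 1 ≤ j → j ≤ q →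
      (L ((β j : ℝ) - 1) \ L ((β j : ℝ)) =
        ((Finset.Icc 1 r).filter (fun i => ⌈lam i⌉ = β j)).biUnion Shat) ∧
      ∃ i, 1 ≤ i ∧ i ≤ r ∧ ⌈lam i⌉ = β j ∧
        L ((β j : ℝ) - 1) = (if i < r then L (lam (i + 1)) else Finset.univ) := by
  intro j hj1 hjq
  classical
  set b : ℤ := β j with hbdef
  have hanti : ∀ i' i, 1 ≤ i → i ≤ i' → i' ≤ r → lam i' ≤ lam i := by
    intro i'
    induction i' with
    | zero => intro i h1 h2 h3; omega
    | succ k ih =>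
      intro i h1 h2 h3
      rcases eq_or_lt_of_le h2 with he | hlt2
      · rw [he]
      · have hik : i ≤ k := Nat.lt_succ_iff.mp hlt2
        have h1k : 1 ≤ k := le_trans h1 hik
        have ha := hlamdec k h1k (by omega)
        have hb := ih i h1 hik (by omega)
        linarith
  have hessj : L ((b : ℝ)) ≠ L ((b : ℝ) - 1) := (hess b).2 ⟨j, hj1, hjq, hbdef.symm⟩
  have hexists_crit : ∀ a c : ℝ, a < c → L a ≠ L c →
      ∃ i, 1 ≤ i ∧ i ≤ r ∧ a < lam i ∧ lam i ≤ c := by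
    intro a c hac hne
    by_contra hno
    push_neg at hno
    apply hne
    apply L_eq_of_no_crit hp0 hint hsup hL hac
    intro μ h1 h2 hcr
    obtain ⟨i, hi1, hi2, hie⟩ := (hcrit μ).1 hcr
    have hgt := hno i hi1 hi2 (by rw [hie]; exact h1)
    rw [hie] at hgt
    linarith
  set T := (Finset.Icc 1 r).filter (fun i => ⌈lam i⌉ = b) with hT
  have hmemT : ∀ i, i ∈ T ↔ (1 ≤ i ∧ i ≤ r) ∧ ((b : ℝ) - 1 < lam i ∧ lam i ≤ (b : ℝ)) := by
    intro i
    rw [hT, Finset.mem_filter, Finset.mem_Icc, Int.ceil_eq_iff]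
  have hTne : T.Nonempty := by
    obtain ⟨i, h1, h2, h3, h4⟩ := hexists_crit ((b : ℝ) - 1) (b : ℝ) (by linarith)
      (fun h => hessj h.symm)
    exact ⟨i, (hmemT i).2 ⟨⟨h1, h2⟩, h3, h4⟩⟩
  set i₁ := T.min' hTne with hi₁
  set i₂ := T.max' hTne with hi₂
  have hi₁T : i₁ ∈ T := T.min'_mem hTne
  have hi₂T : i₂ ∈ T := T.max'_mem hTne
  obtain ⟨⟨h1i₁, hi₁r⟩, hlo₁, hhi₁⟩ := (hmemT i₁).1 hi₁T
  obtain ⟨⟨h1i₂, hi₂r⟩, hlo₂, hhi₂⟩ := (hmemT i₂).1 hi₂T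
  have hTicc : T = Finset.Icc i₁ i₂ := by
    apply Finset.Subset.antisymm
    · intro i hi
      exact Finset.mem_Icc.2 ⟨T.min'_le i hi, T.le_max' i hi⟩
    · intro i hi
      obtain ⟨ha1, ha2⟩ := Finset.mem_Icc.1 hi
      have h1 : 1 ≤ i := le_trans h1i₁ ha1
      have h2 : i ≤ r := le_trans ha2 hi₂r
      have hup : lam i ≤ lam i₁ := hanti i i₁ h1i₁ ha1 h2
      have hdown : lam i₂ ≤ lam i := hanti i₂ i h1 ha2 hi₂r
      exact (hmemT i).2 ⟨⟨h1, h2⟩, by linarith, by linarith⟩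
  have hLb : L ((b : ℝ)) = L (lam i₁) := by
    rcases eq_or_lt_of_le hhi₁ with he | hlt
    · rw [he]
    · symm
      apply L_eq_of_no_crit hp0 hint hsup hL hlt
      intro μ hμ1 hμ2 hcr
      obtain ⟨i, hia, hib, hie⟩ := (hcrit μ).1 hcr
      have hiT : i ∈ T := (hmemT i).2
        ⟨⟨hia, hib⟩, by rw [hie]; linarith, by rw [hie]; linarith⟩
      have hle : i₁ ≤ i := T.min'_le i hiT
      have hle2 : lam i ≤ lam i₁ := hanti i i₁ h1i₁ hle hib
      rw [hie] at hle2
      linarith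
  have hLb1 : L ((b : ℝ) - 1) = (if i₂ < r then L (lam (i₂ + 1)) else Finset.univ) := by
    by_cases hir : i₂ < r
    · rw [if_pos hir]
      have h1i₂' : 1 ≤ i₂ + 1 := by omega
      have hi₂'r : i₂ + 1 ≤ r := hir
      have hnext : lam (i₂ + 1) < lam i₂ := hlamdec i₂ h1i₂ hir
      have hle : lam (i₂ + 1) ≤ (b : ℝ) - 1 := by
        by_contra hgt
        push_neg at hgt
        have hmem : i₂ + 1 ∈ T := (hmemT _).2 ⟨⟨h1i₂', hi₂'r⟩, hgt, by linarith⟩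
        have := T.le_max' _ hmem
        omega
      rcases eq_or_lt_of_le hle with he | hlt
      · rw [he]
      · symm
        apply L_eq_of_no_crit hp0 hint hsup hL hlt
        intro μ hμ1 hμ2 hcr
        obtain ⟨i, hia, hib, hie⟩ := (hcrit μ).1 hcr
        have hii : i ≤ i₂ := by
          by_contra hgt'
          push_neg at hgt'
          have hle3 : lam i ≤ lam (i₂ + 1) := hanti i (i₂ + 1) h1i₂' hgt' hib
          rw [hie] at hle3
          linarith
        have hle4 : lam i₂ ≤ lam i := hanti i₂ i hia hii hi₂r
        rw [hie] at hle4
        linarith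
    · rw [if_neg hir]
      obtain ⟨μ₀, hμ₀⟩ := L_univ_small hp0 hfin hint hL
      set a : ℝ := min μ₀ ((b : ℝ) - 2) with hadef
      have hLa : L a = Finset.univ := hμ₀ a (min_le_left _ _)
      have halt : a < (b : ℝ) - 1 := lt_of_le_of_lt (min_le_right _ _) (by linarith)
      rw [← hLa]
      symm
      apply L_eq_of_no_crit hp0 hint hsup hL halt
      intro μ hμ1 hμ2 hcr
      obtain ⟨i, hia, hib, hie⟩ := (hcrit μ).1 hcr
      have hii : i ≤ i₂ := by omega
      have hle4 : lam i₂ ≤ lam i := hanti i₂ i hia hii hi₂r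
      rw [hie] at hle4
      linarith
  have htel : ∀ k, i₁ ≤ k → k ≤ r →
      (Finset.Icc i₁ k).biUnion Shat =
        (if k < r then L (lam (k + 1)) else Finset.univ) \ L (lam i₁) := by
    intro k
    induction k with
    | zero => intro h1 h2; omega
    | succ n ih =>
      intro h1 h2
      rcases eq_or_lt_of_le h1 with he | hlt
      · rw [← he, Finset.Icc_self, Finset.singleton_biUnion]
        by_cases hir : i₁ < r
        · rw [if_pos hir, hShat i₁ h1i₁ hir]
        · have heq : i₁ = r := by omega
          rw [if_neg hir, heq, hShatr]
      · have hn1 : i₁ ≤ n := by omega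
        have hnr : n < r := by omega
        rw [← Finset.insert_Icc_right_eq_Icc_add_one h1, Finset.biUnion_insert, ih hn1 (le_of_lt hnr),
          if_pos hnr]
        have hSn1 : Shat (n + 1) =
            (if n + 1 < r then L (lam (n + 1 + 1)) else Finset.univ) \ L (lam (n + 1)) := by
          by_cases hir : n + 1 < r
          · rw [if_pos hir, hShat (n + 1) (by omega) hir]
          · have heq : n + 1 = r := by omega
            rw [if_neg hir, heq, hShatr]
        rw [hSn1]
        apply sdiff_union_sdiff_of_subset
        · exact L_antitone hp0 hint hsup hL (hanti (n + 1) i₁ h1i₁ (by omega) h2)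
        · by_cases hir : n + 1 < r
          · rw [if_pos hir]
            exact L_antitone hp0 hint hsup hL (le_of_lt (hlamdec (n + 1) (by omega) hir))
          · rw [if_neg hir]
            exact Finset.subset_univ _
  have hceil₂ : ⌈lam i₂⌉ = b := (Finset.mem_filter.1 hi₂T).2
  refine ⟨?_, i₂, h1i₂, hi₂r, hceil₂, hLb1⟩
  rw [hTicc, hLb, hLb1, htel i₂ (T.min'_le i₂ hi₂T) hi₂r]
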